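/- Let G be a group, V a nonzero complex vector space, and π an irreducible representation of G on V by ℂ-linear automorphisms such that every ℂ-linear G-equivariant endomorphism of V is a scalar multiple of the identity (Schur's lemma). Let E be a subfield of ℂ and let W ⊆ V be an E-rational structure of (π,V). Let σ be a field automorphism of ℂ fixing E pointwise, and let t : V → V be a σ-linear G-equivariant bijection. Then there exists λ ∈ ℂˣ such that for every finite family z₁,…,z_r ∈ ℂ and v₁,…,v_r ∈ W one has t(z₁v₁ + ⋯ + z_r v_r) = λ·(σ(z₁)v₁ + ⋯ + σ(z_r)v_r). -/

import Mathlib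

set_option synthInstance.maxHeartbeats 1000000
set_option maxHeartbeats 1000000

open TensorProduct

/-- The canonical `E`-linear map `ℂ ⊗[E] W → V` sending `c ⊗ w` to `c • w`,
for a subfield `E` of `ℂ` and an `E`-subspace `W` of a complex vector space `V`. -/
noncomputable def canonicalTensorMap (E : Subfield ℂ) {V : Type*} [AddCommGroup V] [Module ℂ V]
    (W : Submodule E V) : ℂ ⊗[E] W →ₗ[E] V :=
  TensorProduct.lift
    { toFun := fun c =>
        { toFun := fun w => c • (w : V)
          map_add' := fun w₁ w₂ => by simp [smul_add]
          map_smul' := fun e w => by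
            simp only [Submodule.coe_smul, RingHom.id_apply]
            rw [smul_comm] }
      map_add' := fun c₁ c₂ => by ext w; simp [add_smul]
      map_smul' := fun e c => by ext w; simp [smul_assoc] }

/-- Let `π` be an irreducible representation of a group `G` on a nonzero complex vector space
`V` for which Schur's lemma holds, `E` a subfield of `ℂ`, and `W` an `E`-rational structure of
`(π, V)`.  If `σ` is a field automorphism of `ℂ` fixing `E` pointwise and `t : V → V` is a
`σ`-linear `G`-equivariant bijection, then there is `λ ∈ ℂˣ` such that
`t (∑ zᵢ vᵢ) = λ • ∑ σ(zᵢ) vᵢ` for every finite family `zᵢ ∈ ℂ`, `vᵢ ∈ W`. -/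
theorem sigma_linear_map_on_rational_structure
    {G V : Type*} [Group G] [AddCommGroup V] [Module ℂ V] [Nontrivial V]
    (π : G →* (V ≃ₗ[ℂ] V))
    (hirr : ∀ U : Submodule ℂ V, (∀ g : G, ∀ v ∈ U, π g v ∈ U) → U = ⊥ ∨ U = ⊤)
    (hschur : ∀ f : V →ₗ[ℂ] V, (∀ (g : G) (v : V), f (π g v) = π g (f v)) →
      ∃ c : ℂ, ∀ v : V, f v = c • v)
    (E : Subfield ℂ) (W : Submodule E V)
    (hW_stable : ∀ g : G, ∀ v ∈ W, π g v ∈ W)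
    (hW_rat : Function.Bijective (canonicalTensorMap E W))
    (σ : ℂ ≃+* ℂ) (hσ : ∀ e ∈ E, σ e = e)
    (t : V → V) (ht_bij : Function.Bijective t)
    (ht_add : ∀ v₁ v₂ : V, t (v₁ + v₂) = t v₁ + t v₂)
    (ht_smul : ∀ (c : ℂ) (v : V), t (c • v) = σ c • t v)
    (ht_equiv : ∀ (g : G) (v : V), t (π g v) = π g (t v)) :
    ∃ lam : ℂˣ, ∀ (ι : Type) (s : Finset ι) (z : ι → ℂ) (v : ι → W),
      t (∑ i ∈ s, z i • (v i : V)) = (lam : ℂ) • ∑ i ∈ s, σ (z i) • (v i : V) := by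

  classical
  -- `σ` as an `E`-linear equivalence of `ℂ`
  let σE : ℂ ≃ₗ[E] ℂ :=
    { toFun := σ
      invFun := σ.symm
      map_add' := fun a b => map_add σ a b
      map_smul' := fun c x => by
        have h1 : (c : E) • x = (c : ℂ) * x := rfl
        have h2 : (c : E) • σ x = (c : ℂ) * σ x := rfl
        simp only [RingHom.id_apply, h1, h2, map_mul, hσ (c : ℂ) c.2]
      left_inv := σ.left_inv
      right_inv := σ.right_inv }
  let e : (ℂ ⊗[E] W) ≃ₗ[E] V := LinearEquiv.ofBijective _ hW_rat
  have he : ∀ (z : ℂ) (w : W), e (z ⊗ₜ[E] w) = z • (w : V) := by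
    intro z w
    show canonicalTensorMap E W (z ⊗ₜ[E] w) = z • (w : V)
    simp [canonicalTensorMap]
    exact TensorProduct.lift.tmul _ _
  let s : V ≃ₗ[E] V :=
    e.symm.trans ((TensorProduct.congr σE (LinearEquiv.refl E W)).trans e)
  have hkey : ∀ (z : ℂ) (w : W), s (z • (w : V)) = σ z • (w : V) := by
    intro z w
    have h1 : e.symm (z • (w : V)) = z ⊗ₜ[E] w := by
      rw [← he z w, e.symm_apply_apply]
    show e ((TensorProduct.congr σE (LinearEquiv.refl E W)) (e.symm (z • (w : V))))
        = σ z • (w : V)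
    rw [h1, TensorProduct.congr_tmul, he]
    rfl
  have hsemi : ∀ (c : ℂ) (v : V), s (c • v) = σ c • s v := by
    intro c v
    obtain ⟨x, rfl⟩ := e.surjective v
    induction x using TensorProduct.induction_on with
    | zero => simp
    | tmul z w => rw [he, smul_smul, hkey, hkey, map_mul, mul_smul]
    | add x y hx hy =>
        rw [map_add, smul_add, map_add, map_add, smul_add, hx, hy]
  have hGs : ∀ (g : G) (v : V), s (π g v) = π g (s v) := by
    intro g v
    obtain ⟨x, rfl⟩ := e.surjective v
    induction x using TensorProduct.induction_on with
    | zero => simp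
    | tmul z w =>
        rw [he]
        have h1 : π g (z • (w : V)) = z • π g (w : V) := map_smul (π g) z (w : V)
        have hw : π g (w : V) ∈ W := hW_stable g (w : V) w.2
        rw [h1, hkey z ⟨π g (w : V), hw⟩, hkey z w]
        show σ z • π g (w : V) = π g (σ z • (w : V))
        rw [map_smul (π g)]
    | add x y hx hy =>
        rw [map_add, map_add (π g), map_add, hx, hy, map_add, map_add (π g)]
  -- t ∘ s⁻¹ is ℂ-linear and equivariant
  have ht_zero : t 0 = 0 := by
    have := ht_add 0 0
    rw [add_zero] at this
    exact add_eq_left.mp this.symm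
  have hsymm_smul : ∀ (c : ℂ) (v : V), s.symm (c • v) = σ.symm c • s.symm v := by
    intro c v
    apply s.injective
    rw [s.apply_symm_apply, hsemi, s.apply_symm_apply, RingEquiv.apply_symm_apply]
  have hsymm_G : ∀ (g : G) (v : V), s.symm (π g v) = π g (s.symm v) := by
    intro g v
    apply s.injective
    rw [s.apply_symm_apply, hGs, s.apply_symm_apply]
  let f : V →ₗ[ℂ] V :=
    { toFun := fun v => t (s.symm v)
      map_add' := fun a b => by
        show t (s.symm (a + b)) = t (s.symm a) + t (s.symm b)
        rw [map_add, ht_add]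
      map_smul' := fun c v => by
        show t (s.symm (c • v)) = c • t (s.symm v)
        rw [hsymm_smul, ht_smul, RingEquiv.apply_symm_apply] }
  obtain ⟨c, hc⟩ := hschur f (by
    intro g v
    show t (s.symm (π g v)) = π g (t (s.symm v))
    rw [hsymm_G, ht_equiv])
  have hcne : c ≠ 0 := by
    intro h0
    obtain ⟨v0, hv0⟩ := exists_ne (0 : V)
    have h1 : f v0 = 0 := by rw [hc, h0, zero_smul]
    have h2 : t (s.symm v0) = t 0 := by
      show f v0 = t 0
      rw [h1, ht_zero]
    have := ht_bij.injective h2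
    exact hv0 (by simpa using congrArg s this)
  refine ⟨Units.mk0 c hcne, ?_⟩
  intro ι sfin z v
  have hts : ∀ x : V, t x = c • s x := by
    intro x
    have : f (s x) = c • s x := hc (s x)
    simpa [f, s.symm_apply_apply] using this
  rw [hts, map_sum]
  congr 1
  exact Finset.sum_congr rfl fun i _ => hkey (z i) (v i)
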